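/- Let f : V(G) → ℕ with f(v) ≥ 2 for all v. Every loopless degree-2f pseudoforest G can be edge-colored with 2 colors so that each color class is a degree-f forest. -/

import Mathlib

open Classical
set_option linter.unusedSectionVars false
set_option maxHeartbeats 2000000

noncomputable section

namespace MG

variable {V : Type} {E : Type} [Fintype V] [Fintype E] [DecidableEq V]

/-- The number of times vertex `v` occurs as an endpoint of the unordered pair `s`
(so a loop at `v` counts twice). -/
def mult (v : V) (s : Sym2 V) : ℕ :=
  Sym2.lift ⟨fun a b => (if a = v then 1 else 0) + (if b = v then 1 else 0),
    fun _ _ => add_comm _ _⟩ s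

/-- The degree of a vertex in the multigraph whose edges `E` have endpoints given
by `ends` (loops count twice). -/
def degree (ends : E → Sym2 V) (v : V) : ℕ := ∑ e : E, mult v (ends e)

/-- Maximum degree `Δ(G)`. -/
def maxDegree (ends : E → Sym2 V) : ℕ := Finset.univ.sup fun v => degree ends v

/-- `e(S)`: the number of edges with all endpoints in `S`. -/
def edgesWithin (ends : E → Sym2 V) (S : Finset V) : ℕ :=
  (Finset.univ.filter fun e => ∀ v ∈ ends e, v ∈ S).card

/-- The degree of `v` in the subgraph induced by `S`. -/
def degreeIn (ends : E → Sym2 V) (S : Finset V) (v : V) : ℕ :=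
  ∑ e ∈ Finset.univ.filter (fun e => ∀ u ∈ ends e, u ∈ S), mult v (ends e)

/-- Adjacency; a vertex with a loop is adjacent to itself. -/
def Adj (ends : E → Sym2 V) (u v : V) : Prop := ∃ e, ends e = s(u, v)

/-- The multigraph has no loops. -/
def Loopless (ends : E → Sym2 V) : Prop := ∀ e, ¬ (ends e).IsDiag

/-- Reachability by walks. -/
def Reaches (ends : E → Sym2 V) (u v : V) : Prop :=
  Relation.ReflTransGen (Adj ends) u v

/-- The connected component of `v`, as a set of vertices. -/
def component (ends : E → Sym2 V) (v : V) : Finset V :=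
  Finset.univ.filter fun u => Reaches ends v u

/-- A pseudoforest: every connected component contains at most one cycle
(a loop counts as a cycle); equivalently, every connected component has at
most as many edges as vertices. -/
def IsPseudoforest (ends : E → Sym2 V) : Prop :=
  ∀ v : V, edgesWithin ends (component ends v) ≤ (component ends v).card

/-- A forest (acyclic multigraph): every connected component has strictly fewer
edges than vertices. -/
def IsForest (ends : E → Sym2 V) : Prop :=
  ∀ v : V, edgesWithin ends (component ends v) + 1 ≤ (component ends v).card

/-- An orientation assigns to each edge an ordered pair of its endpoints
(tail, head). -/
def IsOrientation (ends : E → Sym2 V) (D : E → V × V) : Prop :=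
  ∀ e, Sym2.mk (D e).1 (D e).2 = ends e

/-- Indegree of `v` under the orientation `D`. -/
def inDeg (D : E → V × V) (v : V) : ℕ := (Finset.univ.filter fun e => (D e).2 = v).card

/-- Outdegree of `v` under the orientation `D`. -/
def outDeg (D : E → V × V) (v : V) : ℕ := (Finset.univ.filter fun e => (D e).1 = v).card

/-- `G` is `(g,h)`-orientable: there is an orientation in which every vertex `v`
has indegree at most `g v` and outdegree at most `h v`. -/
def GHOrientable (ends : E → Sym2 V) (g h : V → ℕ∞) : Prop :=
  ∃ D : E → V × V, IsOrientation ends D ∧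
    (∀ v, (inDeg D v : ℕ∞) ≤ g v) ∧ (∀ v, (outDeg D v : ℕ∞) ≤ h v)

/-- `(g,h)` is a valid pair of functions for `G`. -/
def ValidPair (ends : E → Sym2 V) (g h : V → ℕ∞) : Prop :=
  (∀ v : V, 1 ≤ g v + h v) ∧
  (∀ u v : V, Adj ends u v → 1 ≤ g u + g v) ∧
  (∀ u v : V, Adj ends u v → 1 ≤ h u + h v)

/-- The endpoint map of the subgraph consisting of the edges satisfying `P`. -/
def subEnds (ends : E → Sym2 V) (P : E → Prop) : {e // P e} → Sym2 V :=
  fun e => ends e.val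

/-- A `(g,h)`-oriented-coloring: each color class is a `(g,h)`-orientable subgraph. -/
def GHColoring (ends : E → Sym2 V) (g h : V → ℕ∞) {k : ℕ} (C : E → Fin k) : Prop :=
  ∀ c : Fin k, GHOrientable (subEnds ends fun e => C e = c) g h

/-- The `(g,h)`-oriented chromatic index `χ'_{(g,h)}(G)`. -/
def ghChromaticIndex (ends : E → Sym2 V) (g h : V → ℕ∞) : ℕ :=
  sInf {k | ∃ C : E → Fin k, GHColoring ends g h C}

/-- Ceiling division `⌈a/b⌉` on ℕ. -/
def cdiv (a b : ℕ) : ℕ := (a + b - 1) / b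

/-- Replace `∞` values of `g` by the maximum degree `Δ(G)`. -/
def trunc (ends : E → Sym2 V) (g : V → ℕ∞) (v : V) : ℕ :=
  WithTop.untopD (maxDegree ends) (g v)

/-- The weighted maximum degree `Δ_{(g,h)}(G) = max_v ⌈d(v)/(g(v)+h(v))⌉`
(values `∞` of `g, h` replaced by `Δ(G)`). -/
def ghMaxDegree (ends : E → Sym2 V) (g h : V → ℕ∞) : ℕ :=
  Finset.univ.sup fun v => cdiv (degree ends v) (trunc ends g v + trunc ends h v)

/-- The weighted maximum density
`W_{(g,h)}(G) = max_{S, g(S) ≥ 1, h(S) ≥ 1} ⌈e(S)/min{g(S),h(S)}⌉`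
(values `∞` of `g, h` replaced by `Δ(G)`). -/
def ghMaxDensity (ends : E → Sym2 V) (g h : V → ℕ∞) : ℕ :=
  (Finset.univ.filter fun S : Finset V =>
      (1 ≤ ∑ v ∈ S, g v) ∧ (1 ≤ ∑ v ∈ S, h v)).sup
    fun S => cdiv (edgesWithin ends S)
      (min (∑ v ∈ S, trunc ends g v) (∑ v ∈ S, trunc ends h v))

/-- An edge-coloring into pseudoforests. -/
def PaColoring (ends : E → Sym2 V) {k : ℕ} (C : E → Fin k) : Prop :=
  ∀ c : Fin k, IsPseudoforest (subEnds ends fun e => C e = c)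

/-- The pseudoarboricity `pa(G)`. -/
def pa (ends : E → Sym2 V) : ℕ := sInf {k | ∃ C : E → Fin k, PaColoring ends C}

/-- An edge-coloring into degree-`f` pseudoforests. -/
def PafColoring (ends : E → Sym2 V) (f : V → ℕ) {k : ℕ} (C : E → Fin k) : Prop :=
  ∀ c : Fin k, IsPseudoforest (subEnds ends fun e => C e = c) ∧
    ∀ v, degree (subEnds ends fun e => C e = c) v ≤ f v

/-- The degree-`f` pseudoarboricity `pa_f(G)`. -/
def paf (ends : E → Sym2 V) (f : V → ℕ) : ℕ :=
  sInf {k | ∃ C : E → Fin k, PafColoring ends f C}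

/-- The weighted maximum degree `Δ_f(G) = max_v ⌈d(v)/f(v)⌉`. -/
def fMaxDegree (ends : E → Sym2 V) (f : V → ℕ) : ℕ :=
  Finset.univ.sup fun v => cdiv (degree ends v) (f v)

/-- An edge-coloring into degree-`f` forests. -/
def AfColoring (ends : E → Sym2 V) (f : V → ℕ) {k : ℕ} (C : E → Fin k) : Prop :=
  ∀ c : Fin k, IsForest (subEnds ends fun e => C e = c) ∧
    ∀ v, degree (subEnds ends fun e => C e = c) v ≤ f v

/-- The degree-`f` arboricity `a_f(G)`. -/
def af (ends : E → Sym2 V) (f : V → ℕ) : ℕ :=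
  sInf {k | ∃ C : E → Fin k, AfColoring ends f C}

/-- The arboricity `a(G)`. -/
def arboricity (ends : E → Sym2 V) : ℕ :=
  sInf {k | ∃ C : E → Fin k, ∀ c : Fin k, IsForest (subEnds ends fun e => C e = c)}

/-- The linear arboricity `la(G)`: color classes are linear forests, i.e.
degree-2 forests. -/
def la (ends : E → Sym2 V) : ℕ := af ends fun _ => 2

/-- `G` is `k`-degenerate: every (induced, nonempty) subgraph has a vertex of
degree at most `k`. -/
def Degenerate (ends : E → Sym2 V) (k : ℕ) : Prop :=
  ∀ S : Finset V, S.Nonempty → ∃ v ∈ S, degreeIn ends S v ≤ k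

/-- An `f`-coloring: in each color class every vertex `v` has degree at most `f v`. -/
def FColoring (ends : E → Sym2 V) (f : V → ℕ) {k : ℕ} (C : E → Fin k) : Prop :=
  ∀ c : Fin k, ∀ v, degree (subEnds ends fun e => C e = c) v ≤ f v

/-- The `f`-chromatic index `χ'_f(G)`. -/
def fChromaticIndex (ends : E → Sym2 V) (f : V → ℕ) : ℕ :=
  sInf {k | ∃ C : E → Fin k, FColoring ends f C}

/-- `G` is bipartite: the vertices can be split into two sides so that every
edge has one endpoint on each side. -/
def Bipartite (ends : E → Sym2 V) : Prop :=
  ∃ P : V → Prop, ∀ e : E, ∃ u v, ends e = s(u, v) ∧ P u ∧ ¬ P v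

/-- The list analogue `χ'_{(g,h),ℓ}(G)`: the least `k` such that every list
assignment with lists of size at least `k` admits a coloring from the lists in
which each color class is `(g,h)`-orientable. -/
def ghListChromaticIndex (ends : E → Sym2 V) (g h : V → ℕ∞) : ℕ :=
  sInf {k | ∀ L : E → Finset ℕ, (∀ e, k ≤ (L e).card) →
    ∃ C : E → ℕ, (∀ e, C e ∈ L e) ∧
      ∀ c : ℕ, GHOrientable (subEnds ends fun e => C e = c) g h}

/-- The list degree-`f` pseudoarboricity `pa_{f,ℓ}(G)`. -/
def pafList (ends : E → Sym2 V) (f : V → ℕ) : ℕ :=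
  sInf {k | ∀ L : E → Finset ℕ, (∀ e, k ≤ (L e).card) →
    ∃ C : E → ℕ, (∀ e, C e ∈ L e) ∧
      ∀ c : ℕ, IsPseudoforest (subEnds ends fun e => C e = c) ∧
        ∀ v, degree (subEnds ends fun e => C e = c) v ≤ f v}

/-- The list `f`-chromatic index `χ'_{f,ℓ}(G)`. -/
def fListChromaticIndex (ends : E → Sym2 V) (f : V → ℕ) : ℕ :=
  sInf {k | ∀ L : E → Finset ℕ, (∀ e, k ≤ (L e).card) →
    ∃ C : E → ℕ, (∀ e, C e ∈ L e) ∧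
      ∀ c : ℕ, ∀ v, degree (subEnds ends fun e => C e = c) v ≤ f v}



/-! ### Auxiliary lemmas -/

section Aux

variable {ends : E → Sym2 V}

lemma mult_mk (v a b : V) :
    mult v s(a, b) = (if a = v then 1 else 0) + (if b = v then 1 else 0) := rfl

lemma one_le_mult {v : V} {s : Sym2 V} (h : v ∈ s) : 1 ≤ mult v s := by
  induction s using Sym2.ind with
  | _ a b =>
    rw [Sym2.mem_iff] at h
    rw [mult_mk]
    rcases h with h | h <;> simp [h.symm]

lemma mult_le_one {v : V} {s : Sym2 V} (h : ¬ s.IsDiag) : mult v s ≤ 1 := by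
  induction s using Sym2.ind with
  | _ a b =>
    rw [Sym2.mk_isDiag_iff] at h
    rw [mult_mk]
    by_cases ha : a = v <;> by_cases hb : b = v <;>
      simp only [if_pos, if_neg, ha, hb, ite_true, ite_false]
    · exact absurd (ha.trans hb.symm) h
    all_goals omega

lemma mem_of_mult_pos {v : V} {s : Sym2 V} (h : 1 ≤ mult v s) : v ∈ s := by
  induction s using Sym2.ind with
  | _ a b =>
    rw [Sym2.mem_iff]
    by_contra hc
    push_neg at hc
    rw [mult_mk] at h
    simp [Ne.symm hc.1, Ne.symm hc.2] at h

lemma sum_mult (S : Finset V) (a b : V) :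
    ∑ u ∈ S, mult u s(a, b) =
      (if a ∈ S then 1 else 0) + (if b ∈ S then 1 else 0) := by
  simp only [mult_mk, Finset.sum_add_distrib, Finset.sum_ite_eq]

lemma sum_mult_sym2 (S : Finset V) (s : Sym2 V) (h : ∀ v ∈ s, v ∈ S) :
    ∑ u ∈ S, mult u s = 2 := by
  induction s using Sym2.ind with
  | _ a b =>
    rw [sum_mult, if_pos (h a (by simp)), if_pos (h b (by simp))]

lemma adj_symm {u v : V} (h : Adj ends u v) : Adj ends v u := by
  obtain ⟨e, he⟩ := h
  exact ⟨e, by rw [he, Sym2.eq_swap]⟩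

lemma reaches_symm {u v : V} (h : Reaches ends u v) : Reaches ends v u :=
  haveI : Std.Symm (Adj ends) := ⟨fun _ _ => adj_symm⟩
  (inferInstance : Std.Symm (Relation.ReflTransGen (Adj ends))).symm _ _ h

lemma mem_component {u v : V} : u ∈ component ends v ↔ Reaches ends v u := by
  simp [component]

lemma self_mem_component (v : V) : v ∈ component ends v :=
  mem_component.2 Relation.ReflTransGen.refl

lemma component_eq_of_mem {u v : V} (h : u ∈ component ends v) :
    component ends u = component ends v := by
  rw [mem_component] at h
  ext z
  rw [mem_component, mem_component]
  exact ⟨fun hz => h.trans hz, fun hz => (reaches_symm h).trans hz⟩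

lemma adj_mem_component {u v w : V} (h : u ∈ component ends w) (ha : Adj ends u v) :
    v ∈ component ends w := by
  rw [mem_component] at h ⊢
  exact h.tail ha

lemma adj_of_edge {e : E} {a b : V} (ha : a ∈ ends e) (hb : b ∈ ends e)
    (hab : a ≠ b) : Adj ends a b := by
  obtain ⟨⟨p, q⟩, hs⟩ := (ends e).exists_rep
  rw [← hs, Sym2.mem_iff] at ha hb
  rcases ha with rfl | rfl <;> rcases hb with rfl | rfl
  · exact absurd rfl hab
  · exact ⟨e, hs.symm⟩
  · exact ⟨e, by rw [← hs, Sym2.eq_swap]⟩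
  · exact absurd rfl hab

lemma edge_within_component {e : E} {a w : V} (ha : a ∈ ends e)
    (haw : a ∈ component ends w) : ∀ v ∈ ends e, v ∈ component ends w := by
  intro v hv
  by_cases hva : v = a
  · exact hva ▸ haw
  · exact adj_mem_component haw (adj_of_edge ha hv (Ne.symm hva))

end Aux


section Aux2

variable {ends : E → Sym2 V}

lemma card_filter_subtype (P : E → Prop) [Fintype {e // P e}] (Q : E → Prop)
    [DecidablePred fun e : {e // P e} => Q e.val] [DecidablePred fun e : E => P e ∧ Q e] :
    (Finset.univ.filter fun e : {e // P e} => Q e.val).card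
      = (Finset.univ.filter fun e => P e ∧ Q e).card := by
  apply Finset.card_bij (fun e _ => e.val)
  · intro a ha
    simp only [Finset.mem_filter, Finset.mem_univ, true_and] at ha ⊢
    exact ⟨a.2, ha⟩
  · intro a _ b _ h
    exact Subtype.ext h
  · intro b hb
    simp only [Finset.mem_filter, Finset.mem_univ, true_and] at hb
    exact ⟨⟨b, hb.1⟩, by simp [hb.2], rfl⟩

lemma sum_subtype_filter (P : E → Prop) [Fintype {e // P e}] (g : E → ℕ) :
    (∑ e : {e // P e}, g e.val) = ∑ e ∈ Finset.univ.filter P, g e :=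
  (Finset.sum_subtype _ (by simp) g).symm

lemma degree_sub (P : E → Prop) [Fintype {e // P e}] (v : V) :
    degree (subEnds ends P) v = ∑ e ∈ Finset.univ.filter P, mult v (ends e) := by
  unfold degree subEnds
  exact sum_subtype_filter P (fun e => mult v (ends e))

lemma edgesWithin_sub (P : E → Prop) [Fintype {e // P e}] (S : Finset V) :
    edgesWithin (subEnds ends P) S
      = (Finset.univ.filter fun e => P e ∧ ∀ v ∈ ends e, v ∈ S).card := by
  unfold edgesWithin subEnds
  exact card_filter_subtype P (fun e => ∀ v ∈ ends e, v ∈ S)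

lemma degreeIn_sub (P : E → Prop) [Fintype {e // P e}] (S : Finset V) (v : V) :
    degreeIn (subEnds ends P) S v
      = ∑ e ∈ Finset.univ.filter (fun e => P e ∧ ∀ u ∈ ends e, u ∈ S),
          mult v (ends e) := by
  unfold degreeIn subEnds
  rw [← Finset.filter_filter, Finset.sum_filter, Finset.sum_filter,
    sum_subtype_filter P (fun e => if ∀ u ∈ ends e, u ∈ S then mult v (ends e) else 0)]

lemma handshake (ends : E → Sym2 V) (S : Finset V) :
    ∑ v ∈ S, degreeIn ends S v = 2 * edgesWithin ends S := by
  unfold degreeIn edgesWithin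
  rw [Finset.sum_comm]
  rw [Finset.sum_congr rfl fun e he => sum_mult_sym2 S (ends e) (Finset.mem_filter.1 he).2]
  rw [Finset.sum_const, smul_eq_mul, mul_comm]

lemma mult_eq_zero_of_not_mem {v : V} {s : Sym2 V} (h : v ∉ s) : mult v s = 0 := by
  by_contra hc
  exact h (mem_of_mult_pos (Nat.pos_of_ne_zero hc))

lemma degreeIn_component_eq_degree {w v : V} (hv : v ∈ component ends w) :
    degreeIn ends (component ends w) v = degree ends v := by
  unfold degreeIn degree
  rw [Finset.sum_filter]
  apply Finset.sum_congr rfl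
  intro e _
  by_cases h : ∀ u ∈ ends e, u ∈ component ends w
  · rw [if_pos h]
  · rw [if_neg h]
    by_contra hm
    have hmem : v ∈ ends e := mem_of_mult_pos (Nat.pos_of_ne_zero (Ne.symm hm))
    exact h (edge_within_component hmem hv)

lemma degreeIn_sub_add_mult_le (P : E → Prop) [Fintype {e // P e}] (S : Finset V) (u : V) (eh : E)
    (heh : ¬ (P eh ∧ ∀ w ∈ ends eh, w ∈ S)) :
    degreeIn (subEnds ends P) S u + mult u (ends eh) ≤ degree ends u := by
  rw [degreeIn_sub]
  have h1 : (Finset.univ.filter fun e => P e ∧ ∀ u ∈ ends e, u ∈ S)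
      ⊆ Finset.univ.erase eh := by
    intro x hx
    simp only [Finset.mem_filter, Finset.mem_univ, true_and] at hx
    refine Finset.mem_erase.2 ⟨?_, Finset.mem_univ x⟩
    rintro rfl
    exact heh hx
  calc ∑ e ∈ Finset.univ.filter (fun e => P e ∧ ∀ u ∈ ends e, u ∈ S),
        mult u (ends e) + mult u (ends eh)
      ≤ ∑ e ∈ Finset.univ.erase eh, mult u (ends e) + mult u (ends eh) :=
        Nat.add_le_add_right (Finset.sum_le_sum_of_subset h1) _
    _ = degree ends u := Finset.sum_erase_add _ _ (Finset.mem_univ eh)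

lemma degree_sub_le (P : E → Prop) [Fintype {e // P e}] (v : V) :
    degree (subEnds ends P) v ≤ degree ends v := by
  rw [degree_sub]
  exact Finset.sum_le_sum_of_subset (Finset.subset_univ _)

lemma fin2_not_zero {c : Fin 2} (h : ¬ c = 0) : c = 1 := by omega

lemma degree_color_split (C : E → Fin 2) (v : V) :
    degree (subEnds ends fun e => C e = 0) v
      + degree (subEnds ends fun e => C e = 1) v = degree ends v := by
  rw [degree_sub, degree_sub, Finset.sum_filter, Finset.sum_filter,
    ← Finset.sum_add_distrib]
  apply Finset.sum_congr rfl
  intro e _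
  by_cases h : C e = 0
  · rw [if_pos h, if_neg (by omega : ¬ C e = 1), add_zero]
  · rw [if_neg h, if_pos (by omega : C e = 1), zero_add]

lemma adj_sub {P : E → Prop} {u v : V} (h : Adj (subEnds ends P) u v) :
    Adj ends u v := by
  obtain ⟨e, he⟩ := h
  exact ⟨e.val, he⟩

lemma reaches_sub {P : E → Prop} {u v : V} (h : Reaches (subEnds ends P) u v) :
    Reaches ends u v :=
  Relation.ReflTransGen.mono (fun _ _ => adj_sub) u v h

lemma component_sub_subset (P : E → Prop) (v : V) :
    component (subEnds ends P) v ⊆ component ends v := by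
  intro u hu
  exact mem_component.2 (reaches_sub (mem_component.1 hu))

lemma exists_crossing {S : Finset V} {w b : V} (hw : w ∈ S)
    (h : Reaches ends w b) (hb : b ∉ S) :
    ∃ a ∈ S, ∃ b', b' ∉ S ∧ Adj ends a b' := by
  induction h with
  | refl => exact absurd hw hb
  | @tail c d hwc hcd ih =>
    by_cases hc : c ∈ S
    · exact ⟨c, hc, d, hb, hcd⟩
    · exact ih hc

end Aux2


section Base

variable {ends : E → Sym2 V}

lemma all_mem_singleton_isDiag {s : Sym2 V} {u : V}
    (h : ∀ v ∈ s, v ∈ ({u} : Finset V)) : s.IsDiag := by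
  induction s using Sym2.ind with
  | _ a b =>
    have ha := h a (by simp)
    have hb := h b (by simp)
    simp only [Finset.mem_singleton] at ha hb
    rw [Sym2.mk_isDiag_iff, ha, hb]

lemma edgesWithin_singleton (ends : E → Sym2 V) (hloop : Loopless ends) (u : V) :
    edgesWithin ends {u} = 0 := by
  unfold edgesWithin
  rw [Finset.card_eq_zero, Finset.filter_eq_empty_iff]
  intro e _
  intro hw
  exact hloop e (all_mem_singleton_isDiag hw)

lemma degree_zero_component {u : V} (h : degree ends u = 0) :
    component ends u = {u} := by
  have hm : ∀ e : E, mult u (ends e) = 0 := by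
    unfold degree at h
    intro e
    exact Finset.sum_eq_zero_iff.1 h e (Finset.mem_univ e)
  ext z
  simp only [Finset.mem_singleton, mem_component]
  constructor
  · intro hz
    rcases Relation.ReflTransGen.cases_head hz with h1 | ⟨c, ⟨e, he⟩, _⟩
    · exact h1.symm
    · exfalso
      have hmem : u ∈ ends e := by rw [he]; simp
      have := one_le_mult hmem
      rw [hm e] at this
      omega
  · rintro rfl
    exact Relation.ReflTransGen.refl

/-- The component of any vertex of an edge, canonically. -/
def componentOf (ends : E → Sym2 V) (e : E) : Finset V :=
  component ends (ends e).out.1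

lemma edge_within_componentOf (ends : E → Sym2 V) (e : E) :
    ∀ v ∈ ends e, v ∈ componentOf ends e :=
  edge_within_component (Sym2.out_fst_mem _) (self_mem_component _)

lemma componentOf_eq_of_mem {e : E} {v : V} (h : v ∈ ends e) :
    componentOf ends e = component ends v :=
  component_eq_of_mem (edge_within_component h (self_mem_component v) _
    (Sym2.out_fst_mem _))

/-- A choice of edge within a given set. -/
def selW (ends : E → Sym2 V) (K : Finset V)
    (h : ∃ e, ∀ v ∈ ends e, v ∈ K) : E := h.choose

lemma selW_spec (ends : E → Sym2 V) (K : Finset V)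
    (h : ∃ e, ∀ v ∈ ends e, v ∈ K) : ∀ v ∈ ends (selW ends K h), v ∈ K :=
  h.choose_spec

lemma selW_congr {K K' : Finset V} (hK : K = K')
    (h : ∃ e, ∀ v ∈ ends e, v ∈ K) (h' : ∃ e, ∀ v ∈ ends e, v ∈ K') :
    selW ends K h = selW ends K' h' := by
  subst hK
  rfl

lemma forest_of_degreeIn_lt {E' : Type} [Fintype E'] (ends' : E' → Sym2 V)
    (H : ∀ u : V, ∑ v ∈ component ends' u, degreeIn ends' (component ends' u) v
        < 2 * (component ends' u).card) : IsForest ends' := by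
  intro u
  have h1 := handshake ends' (component ends' u)
  have h2 := H u
  omega

lemma base_coloring (ends : E → Sym2 V) (f : V → ℕ) (hf : ∀ v, 2 ≤ f v)
    (hloop : Loopless ends) (hdeg : ∀ v, degree ends v ≤ 2) :
    ∃ C : E → Fin 2, ∀ c : Fin 2,
      IsForest (subEnds ends fun e => C e = c) ∧
      ∀ v, degree (subEnds ends fun e => C e = c) v ≤ f v := by
  classical
  set C : E → Fin 2 := fun e =>
    if e = selW ends (componentOf ends e) ⟨e, edge_within_componentOf ends e⟩
    then 0 else 1 with hC
  have hCzero : ∀ e : E, C e = 0 →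
      e = selW ends (componentOf ends e) ⟨e, edge_within_componentOf ends e⟩ := by
    intro e he
    by_contra hne
    simp only [hC, if_neg hne] at he
    exact absurd he (by decide)
  refine ⟨C, fun c => ⟨?_, fun v =>
    le_trans (degree_sub_le _ v) (le_trans (hdeg v) (hf v))⟩⟩
  apply forest_of_degreeIn_lt
  intro u
  set G' := subEnds ends (fun e => C e = c) with hG'
  set S := component G' u with hS
  have huS : u ∈ S := self_mem_component u
  have hcard : 1 ≤ S.card := Finset.card_pos.2 ⟨u, huS⟩
  have hSsub : ∀ z ∈ S, z ∈ component ends u := by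
    intro z hz
    rw [hS] at hz
    rw [hG'] at hz
    exact component_sub_subset _ u hz
  rcases (by omega : c = 0 ∨ c = 1) with hc | hc
  · -- color 0: at most one incidence per vertex
    have hv1 : ∀ v ∈ S, degreeIn G' S v ≤ 1 := by
      intro v _
      rw [hG', degreeIn_sub]
      rw [← Finset.sum_filter_of_ne
        (p := fun e => v ∈ ends e)
        (fun e _ hne => mem_of_mult_pos (Nat.pos_of_ne_zero hne))]
      refine le_trans (Finset.sum_le_sum fun e _ => mult_le_one (hloop e)) ?_
      rw [Finset.sum_const, smul_eq_mul, mul_one]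
      apply Finset.card_le_one.2
      intro a ha b hb
      simp only [Finset.mem_filter, Finset.mem_univ, true_and] at ha hb
      have ha0 : C a = 0 := by rw [← hc]; exact ha.1.1
      have hb0 : C b = 0 := by rw [← hc]; exact hb.1.1
      have hca : componentOf ends a = componentOf ends b := by
        rw [componentOf_eq_of_mem ha.2, componentOf_eq_of_mem hb.2]
      rw [hCzero a ha0, hCzero b hb0]
      exact selW_congr hca _ _
    calc ∑ v ∈ S, degreeIn G' S v ≤ ∑ v ∈ S, 1 := Finset.sum_le_sum hv1
      _ = S.card := by rw [Finset.sum_const, smul_eq_mul, mul_one]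
      _ < 2 * S.card := by omega
  · -- color 1
    by_cases hu0 : degree ends u = 0
    · have hdsub : degree G' u = 0 := by
        rw [hG']
        exact Nat.le_zero.1 (hu0 ▸ degree_sub_le _ u)
      have hSu : S = {u} := degree_zero_component hdsub
      have hhs := handshake G' S
      rw [hSu] at hhs ⊢
      have hz : edgesWithin G' ({u} : Finset V) = 0 :=
        edgesWithin_singleton G' (fun e => hloop e.val) u
      rw [hz] at hhs
      rw [hhs]
      simp
    · have hex1 : ∃ e : E, u ∈ ends e := by
        by_contra hcon
        push_neg at hcon
        apply hu0
        unfold degree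
        exact Finset.sum_eq_zero fun e _ => mult_eq_zero_of_not_mem (hcon e)
      obtain ⟨e₁, he₁⟩ := hex1
      have hexK : ∃ e : E, ∀ v ∈ ends e, v ∈ component ends u :=
        ⟨e₁, edge_within_component he₁ (self_mem_component u)⟩
      set estar := selW ends (component ends u) hexK with hestar
      have hstarW : ∀ v ∈ ends estar, v ∈ component ends u :=
        selW_spec ends _ hexK
      have hstar0 : C estar = 0 := by
        have hcomp : componentOf ends estar = component ends u :=
          component_eq_of_mem (hstarW _ (Sym2.out_fst_mem _))
        have heq : estar = selW ends (componentOf ends estar)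
            ⟨estar, edge_within_componentOf ends estar⟩ :=
          (selW_congr hcomp _ hexK).symm
        simp only [hC]
        rw [if_pos heq]
      have hslack : ∃ eh : E, ¬ ((C eh = c) ∧ ∀ w ∈ ends eh, w ∈ S) ∧
          1 ≤ ∑ v ∈ S, mult v (ends eh) := by
        by_cases hws : ∀ w ∈ ends estar, w ∈ S
        · refine ⟨estar, ?_, ?_⟩
          · rintro ⟨hPe, -⟩
            rw [hstar0, hc] at hPe
            exact absurd hPe (by decide)
          · rw [sum_mult_sym2 S _ hws]
            omega
        · push_neg at hws
          obtain ⟨b, hbe, hbS⟩ := hws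
          have hreach : Reaches ends u b := mem_component.1 (hstarW b hbe)
          obtain ⟨x, hxS, y, hyS, hadj⟩ := exists_crossing huS hreach hbS
          obtain ⟨ec, hec⟩ := hadj
          refine ⟨ec, ?_, ?_⟩
          · rintro ⟨-, hw⟩
            exact hyS (hw y (by rw [hec]; simp))
          · have hx : x ∈ ends ec := by rw [hec]; simp
            calc 1 ≤ mult x (ends ec) := one_le_mult hx
              _ ≤ ∑ v ∈ S, mult v (ends ec) :=
                Finset.single_le_sum (f := fun v => mult v (ends ec))
                  (fun _ _ => Nat.zero_le _) hxS
      obtain ⟨eh, hehP, hehm⟩ := hslack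
      have hsum : ∀ v ∈ S, degreeIn G' S v + mult v (ends eh) ≤ degree ends v := by
        intro v _
        rw [hG']
        exact degreeIn_sub_add_mult_le _ S v eh hehP
      have h2 : ∑ v ∈ S, degreeIn G' S v + ∑ v ∈ S, mult v (ends eh)
          ≤ 2 * S.card := by
        rw [← Finset.sum_add_distrib]
        calc ∑ v ∈ S, (degreeIn G' S v + mult v (ends eh))
            ≤ ∑ v ∈ S, degree ends v := Finset.sum_le_sum hsum
          _ ≤ ∑ v ∈ S, 2 := Finset.sum_le_sum fun v _ => hdeg v
          _ = 2 * S.card := by rw [Finset.sum_const, smul_eq_mul, mul_comm]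
      omega

end Base


section Pendant

variable {ends : E → Sym2 V} {e₀ : E} {v x : V}

/-- Degree decomposes when removing one edge. -/
lemma degree_erase (ends : E → Sym2 V) (e₀ : E) (u : V) :
    degree ends u = mult u (ends e₀)
      + degree (subEnds ends fun e => ¬ e = e₀) u := by
  have h1 : degree (subEnds ends fun e => ¬ e = e₀) u
      = ∑ e ∈ Finset.univ.erase e₀, mult u (ends e) := by
    rw [degree_sub]
    apply Finset.sum_congr _ (fun _ _ => rfl)
    ext e
    simp
  rw [h1]
  unfold degree
  rw [← Finset.sum_erase_add Finset.univ _ (Finset.mem_univ e₀)]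
  omega

section PendantCore

variable (hvx : v ≠ x) (hends : ends e₀ = s(v, x))
  (hiso : ∀ e : E, ¬ e = e₀ → v ∉ ends e)

include hvx hends hiso

/-- v is isolated in the graph minus `e₀`. -/
lemma pendant_isolated :
    degree (subEnds ends fun e => ¬ e = e₀) v = 0 := by
  apply Finset.sum_eq_zero
  intro e _
  exact mult_eq_zero_of_not_mem (hiso e.val e.prop)

lemma pendant_comp_v :
    component (subEnds ends fun e => ¬ e = e₀) v = {v} :=
  degree_zero_component (pendant_isolated hvx hends hiso)

lemma pendant_reaches {u z : V} (hu : u ≠ v) (h : Reaches ends u z) :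
    (z = v ∧ Reaches (subEnds ends fun e => ¬ e = e₀) u x)
      ∨ (z ≠ v ∧ Reaches (subEnds ends fun e => ¬ e = e₀) u z) := by
  induction h with
  | refl => exact Or.inr ⟨hu, Relation.ReflTransGen.refl⟩
  | @tail y z hry hadj ih =>
    obtain ⟨e, he⟩ := hadj
    rcases ih with ⟨rfl, hux⟩ | ⟨hy, huy⟩
    · -- y = v, so the edge must be e₀ and z = x
      have hee : e = e₀ := by
        by_contra hne
        exact hiso e hne (by rw [he]; simp)
      rw [hee, hends] at he
      rcases Sym2.eq_iff.1 he.symm with ⟨-, hzx⟩ | ⟨hvx2, -⟩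
      · subst hzx
        exact Or.inr ⟨Ne.symm hvx, hux⟩
      · exact absurd hvx2 hvx
    · by_cases hee : e = e₀
      · rw [hee, hends] at he
        rcases Sym2.eq_iff.1 he with ⟨hvy, -⟩ | ⟨hvz, hxy⟩
        · exact absurd hvy.symm hy
        · exact Or.inl ⟨hvz.symm, by rw [hxy]; exact huy⟩
      · have hz : z ≠ v := by
          rintro rfl
          exact hiso e hee (by rw [he]; simp)
        exact Or.inr ⟨hz, huy.tail ⟨⟨e, hee⟩, he⟩⟩

lemma pendant_comp_ne {u : V} (hu : u ≠ v) :
    component (subEnds ends fun e => ¬ e = e₀) u = (component ends u).erase v := by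
  ext z
  simp only [Finset.mem_erase, mem_component]
  constructor
  · intro hz
    refine ⟨?_, reaches_sub hz⟩
    intro hzv
    have hmem : u ∈ component (subEnds ends fun e => ¬ e = e₀) v :=
      mem_component.2 (reaches_symm (hzv ▸ hz))
    rw [pendant_comp_v hvx hends hiso] at hmem
    exact hu (Finset.mem_singleton.1 hmem)
  · rintro ⟨hzv, hz⟩
    rcases pendant_reaches hvx hends hiso hu hz with ⟨rfl, -⟩ | ⟨-, h⟩
    · exact absurd rfl hzv
    · exact h

lemma pendant_comp_v_full :
    component ends v
      = insert v (component (subEnds ends fun e => ¬ e = e₀) x) := by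
  ext z
  simp only [Finset.mem_insert, mem_component]
  constructor
  · intro hz
    rcases Relation.ReflTransGen.cases_head hz with rfl | ⟨c, ⟨e, he⟩, hcz⟩
    · exact Or.inl rfl
    · have hee : e = e₀ := by
        by_contra hne
        exact hiso e hne (by rw [he]; simp)
      rw [hee, hends] at he
      have hcx : c = x := by
        rcases Sym2.eq_iff.1 he with ⟨-, hxc⟩ | ⟨hvc, hxv⟩
        · exact hxc.symm
        · exact absurd hxv.symm hvx
      subst hcx
      rcases pendant_reaches hvx hends hiso (Ne.symm hvx) hcz with ⟨rfl, -⟩ | ⟨-, h⟩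
      · exact Or.inl rfl
      · exact Or.inr h
  · rintro (rfl | hz)
    · exact Relation.ReflTransGen.refl
    · exact (Relation.ReflTransGen.single ⟨e₀, hends⟩).trans (reaches_sub hz)

lemma pendant_v_not_mem :
    v ∉ component (subEnds ends fun e => ¬ e = e₀) x := by
  intro hmem
  have hx : x ∈ component (subEnds ends fun e => ¬ e = e₀) v :=
    mem_component.2 (reaches_symm (mem_component.1 hmem))
  rw [pendant_comp_v hvx hends hiso] at hx
  exact hvx (Finset.mem_singleton.1 hx).symm

lemma pendant_edgesWithin_not_mem {S : Finset V} (hvS : v ∉ S) :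
    edgesWithin (subEnds ends fun e => ¬ e = e₀) S = edgesWithin ends S := by
  rw [edgesWithin_sub]
  unfold edgesWithin
  congr 1
  ext e
  simp only [Finset.mem_filter, Finset.mem_univ, true_and]
  constructor
  · exact fun h => h.2
  · intro h
    refine ⟨?_, h⟩
    rintro rfl
    exact hvS (h v (by rw [hends]; simp))

lemma pendant_edgesWithin_insert {T : Finset V} (hxT : x ∈ T) (hvT : v ∉ T) :
    edgesWithin ends (insert v T)
      = edgesWithin (subEnds ends fun e => ¬ e = e₀) T + 1 := by
  rw [edgesWithin_sub]
  unfold edgesWithin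
  have hsplit : Finset.univ.filter (fun e : E => ∀ w ∈ ends e, w ∈ insert v T)
      = insert e₀ (Finset.univ.filter fun e => ¬ e = e₀ ∧ ∀ w ∈ ends e, w ∈ T) := by
    ext e
    simp only [Finset.mem_filter, Finset.mem_univ, true_and, Finset.mem_insert]
    constructor
    · intro h
      by_cases hee : e = e₀
      · exact Or.inl hee
      · refine Or.inr ⟨hee, fun w hw => ?_⟩
        rcases h w hw with rfl | hT
        · exact absurd hw (hiso e hee)
        · exact hT
    · rintro (rfl | ⟨-, h⟩)
      · intro w hw
        rw [hends, Sym2.mem_iff] at hw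
        rcases hw with rfl | rfl
        · exact Or.inl rfl
        · exact Or.inr hxT
      · exact fun w hw => Or.inr (h w hw)
  rw [hsplit, Finset.card_insert_of_notMem (by simp)]
  congr 2
  ext e
  simp

lemma pendant_forest
    (hf : IsForest (subEnds ends fun e => ¬ e = e₀)) : IsForest ends := by
  intro u
  by_cases hvK : v ∈ component ends u
  · have hKv : component ends u = component ends v := (component_eq_of_mem hvK).symm
    rw [hKv, pendant_comp_v_full hvx hends hiso]
    rw [pendant_edgesWithin_insert hvx hends hiso (self_mem_component x)
      (pendant_v_not_mem hvx hends hiso)]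
    rw [Finset.card_insert_of_notMem (pendant_v_not_mem hvx hends hiso)]
    have := hf x
    omega
  · have hu : u ≠ v := fun h => hvK (h ▸ self_mem_component u)
    have hK : component (subEnds ends fun e => ¬ e = e₀) u = component ends u := by
      rw [pendant_comp_ne hvx hends hiso hu, Finset.erase_eq_of_notMem hvK]
    have := hf u
    rw [hK, pendant_edgesWithin_not_mem hvx hends hiso hvK] at this
    exact this

lemma pendant_pseudoforest (hpf : IsPseudoforest ends) :
    IsPseudoforest (subEnds ends fun e => ¬ e = e₀) := by
  intro u
  by_cases hu : u = v
  · rw [hu, pendant_comp_v hvx hends hiso]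
    have hz : edgesWithin (subEnds ends fun e => ¬ e = e₀) ({v} : Finset V) = 0 := by
      rw [edgesWithin_sub, Finset.card_eq_zero]
      apply Finset.eq_empty_of_forall_notMem
      intro e he
      simp only [Finset.mem_filter, Finset.mem_univ, true_and] at he
      obtain ⟨hne, hw⟩ := he
      have hm : (ends e).out.1 ∈ ends e := Sym2.out_fst_mem _
      have hmv := hw _ hm
      rw [Finset.mem_singleton] at hmv
      exact hiso e hne (hmv ▸ hm)
    rw [hz]
    simp
  · rw [pendant_comp_ne hvx hends hiso hu]
    by_cases hvK : v ∈ component ends u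
    · have hKv : component ends u = component ends v := (component_eq_of_mem hvK).symm
      rw [hKv, pendant_comp_v_full hvx hends hiso,
        Finset.erase_insert (pendant_v_not_mem hvx hends hiso)]
      have hle := hpf u
      rw [hKv, pendant_comp_v_full hvx hends hiso,
        pendant_edgesWithin_insert hvx hends hiso (self_mem_component x)
          (pendant_v_not_mem hvx hends hiso),
        Finset.card_insert_of_notMem (pendant_v_not_mem hvx hends hiso)] at hle
      omega
    · rw [Finset.erase_eq_of_notMem hvK,
        pendant_edgesWithin_not_mem hvx hends hiso hvK]
      exact hpf u

end PendantCore

/-- Extract a pendant edge from a degree-one vertex. -/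
lemma exists_pendant (hloop : Loopless ends) {v : V} (h1 : degree ends v = 1) :
    ∃ (e₀ : E) (x : V), v ≠ x ∧ ends e₀ = s(v, x) ∧
      ∀ e : E, ¬ e = e₀ → v ∉ ends e := by
  have hex : ∃ e₀ : E, mult v (ends e₀) ≠ 0 := by
    by_contra hc
    push_neg at hc
    have h0 : degree ends v = 0 := Finset.sum_eq_zero fun e _ => hc e
    omega
  obtain ⟨e₀, hm⟩ := hex
  have hmem : v ∈ ends e₀ := mem_of_mult_pos (Nat.pos_of_ne_zero hm)
  refine ⟨e₀, Sym2.Mem.other hmem, ?_, (Sym2.other_spec hmem).symm, ?_⟩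
  · intro hvo
    apply hloop e₀
    rw [← Sym2.other_spec hmem, ← hvo, Sym2.mk_isDiag_iff]
  · intro e hne hmem'
    have h2 : mult v (ends e₀) + mult v (ends e) ≤ degree ends v := by
      unfold degree
      rw [← Finset.sum_pair (f := fun x => mult v (ends x)) (fun h : e₀ = e => hne h.symm)]
      exact Finset.sum_le_sum_of_subset (Finset.subset_univ _)
    have h3 := one_le_mult hmem
    have h4 := one_le_mult hmem'
    omega

end Pendant

section Counting

variable {ends : E → Sym2 V}

lemma degree_le_two_of_pseudoforest (hpf : IsPseudoforest ends)
    (hno1 : ∀ u, degree ends u ≠ 1) (v : V) : degree ends v ≤ 2 := by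
  by_contra h3
  push_neg at h3
  set K := component ends v with hK
  have hvK : v ∈ K := self_mem_component v
  have hsum : ∑ u ∈ K, degreeIn ends K u = 2 * edgesWithin ends K := handshake ends K
  have hdegIn : ∀ u ∈ K, degreeIn ends K u = degree ends u := by
    intro u hu
    exact degreeIn_component_eq_degree hu
  have hge : ∀ u ∈ K, u ≠ v → 2 ≤ degree ends u := by
    intro u hu huv
    have hr : Reaches ends v u := mem_component.1 hu
    rcases Relation.ReflTransGen.cases_tail hr with rfl | ⟨y, -, ⟨e, he⟩⟩
    · exact absurd rfl huv
    · have hmem : u ∈ ends e := by rw [he]; simp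
      have h1 : 1 ≤ degree ends u := by
        calc 1 ≤ mult u (ends e) := one_le_mult hmem
          _ ≤ degree ends u :=
            Finset.single_le_sum (f := fun e => mult u (ends e))
              (fun _ _ => Nat.zero_le _) (Finset.mem_univ e)
      have := hno1 u
      omega
  have hbig : 2 * K.card + 1 ≤ ∑ u ∈ K, degree ends u := by
    rw [← Finset.add_sum_erase _ _ hvK]
    have h1 : 2 * (K.erase v).card ≤ ∑ u ∈ K.erase v, degree ends u := by
      calc 2 * (K.erase v).card = ∑ _u ∈ K.erase v, 2 := by
            rw [Finset.sum_const, smul_eq_mul, mul_comm]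
        _ ≤ ∑ u ∈ K.erase v, degree ends u :=
            Finset.sum_le_sum fun u hu =>
              hge u (Finset.mem_of_mem_erase hu) (Finset.ne_of_mem_erase hu)
    have h2 : (K.erase v).card = K.card - 1 := Finset.card_erase_of_mem hvK
    have h3' : 1 ≤ K.card := Finset.card_pos.2 ⟨v, hvK⟩
    omega
  have hEq : ∑ u ∈ K, degree ends u = 2 * edgesWithin ends K := by
    rw [← hsum]
    exact (Finset.sum_congr rfl hdegIn).symm
  have hfin := hpf v
  rw [← hK] at hfin
  omega

end Counting


section Transport

variable {E₁ E₂ : Type} [Fintype E₁] [Fintype E₂]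

lemma adj_equiv (φ : E₁ ≃ E₂) (ends₂ : E₂ → Sym2 V) {u w : V} :
    Adj (fun e => ends₂ (φ e)) u w ↔ Adj ends₂ u w :=
  ⟨fun ⟨e, he⟩ => ⟨φ e, he⟩,
   fun ⟨e, he⟩ => ⟨φ.symm e, by simp only [Equiv.apply_symm_apply]; exact he⟩⟩

lemma component_equiv (φ : E₁ ≃ E₂) (ends₂ : E₂ → Sym2 V) (w : V) :
    component (fun e => ends₂ (φ e)) w = component ends₂ w := by
  ext z
  simp only [mem_component]
  exact ⟨fun h' => Relation.ReflTransGen.mono (fun a b h => (adj_equiv φ ends₂).1 h) _ _ h',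
    fun h' => Relation.ReflTransGen.mono (fun a b h => (adj_equiv φ ends₂).2 h) _ _ h'⟩

lemma edgesWithin_equiv (φ : E₁ ≃ E₂) (ends₂ : E₂ → Sym2 V) (S : Finset V) :
    edgesWithin (fun e => ends₂ (φ e)) S = edgesWithin ends₂ S := by
  unfold edgesWithin
  apply Finset.card_bij (fun e _ => φ e)
  · intro a ha
    simp only [Finset.mem_filter, Finset.mem_univ, true_and] at ha ⊢
    exact ha
  · intro a _ b _ h
    exact φ.injective h
  · intro b hb
    simp only [Finset.mem_filter, Finset.mem_univ, true_and] at hb ⊢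
    exact ⟨φ.symm b, by simp only [Equiv.apply_symm_apply]; exact hb,
      Equiv.apply_symm_apply φ b⟩

lemma degree_equiv (φ : E₁ ≃ E₂) (ends₂ : E₂ → Sym2 V) (w : V) :
    degree (fun e => ends₂ (φ e)) w = degree ends₂ w := by
  unfold degree
  exact Equiv.sum_comp φ (fun e => mult w (ends₂ e))

lemma isForest_equiv (φ : E₁ ≃ E₂) (ends₂ : E₂ → Sym2 V)
    (h : IsForest (fun e => ends₂ (φ e))) : IsForest ends₂ := by
  intro u
  have := h u
  rwa [component_equiv φ ends₂, edgesWithin_equiv φ ends₂] at this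

end Transport

theorem main_aux (n : ℕ) : ∀ (E : Type) [Fintype E], Fintype.card E ≤ n →
    ∀ (ends : E → Sym2 V) (f : V → ℕ), (∀ v, 2 ≤ f v) → Loopless ends →
    IsPseudoforest ends → (∀ v, degree ends v ≤ 2 * f v) →
    ∃ C : E → Fin 2, ∀ c : Fin 2,
      IsForest (subEnds ends fun e => C e = c) ∧
      ∀ v, degree (subEnds ends fun e => C e = c) v ≤ f v := by
  induction n with
  | zero =>
    intro E _ hcard ends f hf hloop hpf hdeg
    haveI hE : IsEmpty E := Fintype.card_eq_zero_iff.1 (Nat.le_zero.1 hcard)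
    apply base_coloring ends f hf hloop
    intro v
    have h0 : degree ends v = 0 := by
      unfold degree
      rw [Finset.univ_eq_empty, Finset.sum_empty]
    omega
  | succ n ih =>
    intro E _ hcard ends f hf hloop hpf hdeg
    by_cases hd1 : ∃ v, degree ends v = 1
    · obtain ⟨v, hv1⟩ := hd1
      obtain ⟨e₀, x, hvx, hends, hiso⟩ := exists_pendant hloop hv1
      have hcard' : Fintype.card {e : E // ¬ e = e₀} ≤ n := by
        have h1 : Fintype.card {e : E // ¬ e = e₀} < Fintype.card E :=
          Fintype.card_subtype_lt (x := e₀) (not_not_intro rfl)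
        omega
      obtain ⟨C', hC'⟩ := ih {e : E // ¬ e = e₀} hcard'
        (subEnds ends fun e => ¬ e = e₀) f hf (fun e => hloop e.val)
        (pendant_pseudoforest hvx hends hiso hpf)
        (fun u => le_trans (degree_sub_le _ u) (hdeg u))
      have hxdeg : degree (subEnds ends fun e => ¬ e = e₀) x + 1 ≤ 2 * f x := by
        have h1 := degree_erase ends e₀ x
        have hmx : mult x (ends e₀) = 1 := by
          rw [hends, mult_mk, if_neg hvx, if_pos rfl]
        have h2 := hdeg x
        omega
      have hsplit := degree_color_split (ends := subEnds ends fun e => ¬ e = e₀) C' x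
      have hcx : ∃ c₀ : Fin 2, degree (subEnds (subEnds ends fun e => ¬ e = e₀)
          fun e => C' e = c₀) x + 1 ≤ f x := by
        by_cases h0 : degree (subEnds (subEnds ends fun e => ¬ e = e₀)
            fun e => C' e = 0) x + 1 ≤ f x
        · exact ⟨0, h0⟩
        · exact ⟨1, by omega⟩
      obtain ⟨c₀, hc₀⟩ := hcx
      set C : E → Fin 2 := fun e => if h : e = e₀ then c₀ else C' ⟨e, h⟩ with hCdef
      have hCe₀ : C e₀ = c₀ := by simp [hCdef]
      have hCne : ∀ (e : E) (h : ¬ e = e₀), C e = C' ⟨e, h⟩ := by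
        intro e h
        simp [hCdef, dif_neg h]
      refine ⟨C, fun c => ?_⟩
      by_cases hcc : c = c₀
      · -- the class containing the pendant edge
        subst hcc
        have hCe₀' : C e₀ = c := hCe₀
        set ψ : {e' : {e : E // ¬ e = e₀} // C' e' = c}
            ≃ {q : {e : E // C e = c} // ¬ q = (⟨e₀, hCe₀'⟩ : {e : E // C e = c})} :=
          { toFun := fun p => ⟨⟨p.val.val, (hCne p.val.val p.val.prop).trans p.prop⟩,
              fun h => p.val.prop (congrArg Subtype.val h)⟩
            invFun := fun q => ⟨⟨q.val.val, fun h => q.prop (Subtype.ext h)⟩, by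
              have hq := q.val.prop
              rwa [hCne q.val.val (fun h => q.prop (Subtype.ext h))] at hq⟩
            left_inv := fun p => by
              apply Subtype.ext
              apply Subtype.ext
              rfl
            right_inv := fun q => by
              apply Subtype.ext
              apply Subtype.ext
              rfl } with hψ
        constructor
        · apply pendant_forest (e₀ := (⟨e₀, hCe₀'⟩ : {e : E // C e = c}))
            (v := v) (x := x) hvx hends
          · intro e h
            exact hiso e.val (fun hh => h (Subtype.ext hh))
          · have hforest : IsForest (subEnds (subEnds ends fun e => C e = c)
                fun q => ¬ q = (⟨e₀, hCe₀'⟩ : {e : E // C e = c})) := by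
              apply isForest_equiv ψ (subEnds (subEnds ends fun e => C e = c)
                fun q => ¬ q = (⟨e₀, hCe₀'⟩ : {e : E // C e = c}))
              exact (hC' c).1
            convert hforest using 2
        · intro u
          have hCdeg : degree (fun e' => (subEnds (subEnds ends fun e => C e = c)
              fun q => ¬ q = (⟨e₀, hCe₀'⟩ : {e : E // C e = c})) (ψ e')) u ≤ f u :=
            (hC' c).2 u
          rw [degree_equiv ψ (subEnds (subEnds ends fun e => C e = c)
              fun q => ¬ q = (⟨e₀, hCe₀'⟩ : {e : E // C e = c}))] at hCdeg
          have herase : degree (subEnds ends fun e => C e = c) u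
              = mult u (ends e₀) + degree (subEnds (subEnds ends fun e => C e = c)
                  fun q => ¬ q = (⟨e₀, hCe₀'⟩ : {e : E // C e = c})) u := by
            convert degree_erase (subEnds ends fun e => C e = c)
              (⟨e₀, hCe₀'⟩ : {e : E // C e = c}) u using 3
            rfl
          by_cases hux : u = x
          · subst hux
            have hmx : mult u (ends e₀) = 1 := by
              rw [hends, mult_mk, if_neg hvx, if_pos rfl]
            have hcx2 : degree (fun e' => (subEnds (subEnds ends fun e => C e = c)
                fun q => ¬ q = (⟨e₀, hCe₀'⟩ : {e : E // C e = c})) (ψ e')) u + 1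
                ≤ f u := hc₀
            rw [degree_equiv ψ (subEnds (subEnds ends fun e => C e = c)
                fun q => ¬ q = (⟨e₀, hCe₀'⟩ : {e : E // C e = c}))] at hcx2
            omega
          · by_cases huv : u = v
            · subst huv
              have hmv : mult u (ends e₀) = 1 := by
                rw [hends, mult_mk, if_pos rfl, if_neg (fun h => hvx h.symm)]
              have hiso0 : degree (subEnds ends fun e => ¬ e = e₀) u = 0 :=
                pendant_isolated hvx hends hiso
              have hsub0 : degree (subEnds (subEnds ends fun e => ¬ e = e₀)
                  fun e => C' e = c) u = 0 :=
                Nat.le_zero.1 (hiso0 ▸ degree_sub_le _ u)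
              have hsub0' : degree (fun e' => (subEnds (subEnds ends fun e => C e = c)
                  fun q => ¬ q = (⟨e₀, hCe₀'⟩ : {e : E // C e = c})) (ψ e')) u = 0 :=
                hsub0
              rw [degree_equiv ψ (subEnds (subEnds ends fun e => C e = c)
                  fun q => ¬ q = (⟨e₀, hCe₀'⟩ : {e : E // C e = c}))] at hsub0'
              have hfu := hf u
              omega
            · have hmu : mult u (ends e₀) = 0 := by
                rw [hends, mult_mk, if_neg (fun h => huv h.symm),
                  if_neg (fun h => hux h.symm)]
              have hfu := hf u
              omega
      · -- a class not containing the pendant edge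
        set φ : {e' : {e : E // ¬ e = e₀} // C' e' = c} ≃ {e : E // C e = c} :=
          { toFun := fun p => ⟨p.val.val, (hCne p.val.val p.val.prop).trans p.prop⟩
            invFun := fun q => ⟨⟨q.val, fun h => hcc (by rw [← q.prop, h]; exact hCe₀)⟩,
              by
                have hq := q.prop
                rwa [hCne q.val (fun h => hcc (by rw [← q.prop, h]; exact hCe₀))] at hq⟩
            left_inv := fun p => by
              apply Subtype.ext
              apply Subtype.ext
              rfl
            right_inv := fun q => by
              apply Subtype.ext
              rfl } with hφ
        constructor
        · apply isForest_equiv φ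
          exact (hC' c).1
        · intro u
          have h1 : degree (fun e' => (subEnds ends fun e => C e = c) (φ e')) u
              ≤ f u := (hC' c).2 u
          rw [degree_equiv φ (subEnds ends fun e => C e = c)] at h1
          exact h1
    · push_neg at hd1
      exact base_coloring ends f hf hloop (degree_le_two_of_pseudoforest hpf hd1)


/-- Observation 3.3: every loopless degree-`2f` pseudoforest can be
edge-colored with 2 colors so that each color class is a degree-`f` forest. -/
theorem pseudoforest_two_coloring {V E : Type} [Fintype V] [Fintype E] [DecidableEq V]
    (ends : E → Sym2 V) (f : V → ℕ) (hf : ∀ v, 2 ≤ f v)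
    (hloop : Loopless ends) (hpf : IsPseudoforest ends)
    (hdeg : ∀ v, degree ends v ≤ 2 * f v) :
    ∃ C : E → Fin 2, ∀ c : Fin 2,
      IsForest (subEnds ends fun e => C e = c) ∧
      ∀ v, degree (subEnds ends fun e => C e = c) v ≤ f v := by
  exact main_aux (Fintype.card E) E le_rfl ends f hf hloop hpf hdeg

end MG
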